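/- Contact analysis lemma, case α ∈ [1,2) (Lemma 3.1). Let d ≥ 1, α ∈ [1,2), m > 1, δ ≥ 0. Let u : [0,∞) × ℝ^d → [0,∞) be bounded, C¹ in t and C² in x, such that for v(t,·) := u(t,·)^{m−1} the integrals G(v(t,·))(x) and L(v(t,·))(x) converge absolutely at every point, and such that u satisfies pointwise ∂_t u = ∇_x u · G(v) + u L(v) + δ Δ_x u on (0,∞) × ℝ^d. Let U : (0,∞) × ℝ^d → [0,∞) be radially symmetric in x and non-increasing in ‖x‖, C² in (t,x) on (0,∞) × {x : ‖x‖ > 1}, and such that for V(t,·) := U(t,·)^{m−1} the integrals G(V(t_c,·))(x_c) and L(V(t_c,·))(x_c) below converge absolutely. Suppose u ≤ U on (0,t_c] × ℝ^d and u(t_c,x_c) = U(t_c,x_c) for some t_c > 0 and x_c with ‖x_c‖ > 1, and let γ > 0 satisfy γ ‖∇_x U(t_c,x_c)‖ ≤ U(t_c,x_c). Then at the point (t_c,x_c): ∂_t U ≤ ∇_x U · G(V) + U L(V) + δ Δ_x U + e, where, writing x̂_c = x_c/‖x_c‖ and I⁺_out(w) = ∫_{‖y‖ ≥ γ, y·x̂_c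 ≥ 0} (w(x_c+y) − w(x_c)) (y·x̂_c) ‖y‖^{−(d+α)} dy, the error term is e = ‖∇_x U(t_c,x_c)‖ ( I⁺_out(V(t_c,·)) − I⁺_out(v(t_c,·)) ); moreover e ≥ 0. -/

import Mathlib

open MeasureTheory Metric Set

/-- The (unnormalized) singular integral `G(v)(x) = ∫ (v(x+z) − v(x)) z ‖z‖^{−(d+α)} dz`,
representing `∇(−Δ)^{α/2−1} v` up to a positive constant (form valid for `α ∈ [1,2)`). -/
noncomputable def fracGrad (d : ℕ) (α : ℝ) (v : EuclideanSpace ℝ (Fin d) → ℝ)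
    (x : EuclideanSpace ℝ (Fin d)) : EuclideanSpace ℝ (Fin d) :=
  ∫ z, ((v (x + z) - v x) * ‖z‖ ^ (-((d : ℝ) + α))) • z

/-- The (unnormalized) singular integral
`L(v)(x) = ∫ (v(x+z) + v(x−z) − 2 v(x)) ‖z‖^{−(d+α)} dz`,
representing `−(−Δ)^{α/2} v` up to a positive constant. -/
noncomputable def fracLap (d : ℕ) (α : ℝ) (v : EuclideanSpace ℝ (Fin d) → ℝ)
    (x : EuclideanSpace ℝ (Fin d)) : ℝ :=
  ∫ z, (v (x + z) + v (x - z) - 2 * v x) * ‖z‖ ^ (-((d : ℝ) + α))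

/-- The Laplacian of `f` at `x`: the trace of the second derivative of `f` at `x`,
computed in the standard orthonormal basis of `EuclideanSpace ℝ (Fin d)`. -/
noncomputable def lap (d : ℕ) (f : EuclideanSpace ℝ (Fin d) → ℝ)
    (x : EuclideanSpace ℝ (Fin d)) : ℝ :=
  ∑ i : Fin d, fderiv ℝ (fun y => fderiv ℝ f y (EuclideanSpace.single i 1)) x
    (EuclideanSpace.single i 1)

/-- The outer positive-half drift integral
`I⁺_out(w) = ∫_{‖y‖ ≥ γ, y·x̂_c ≥ 0} (w(x_c+y) − w(x_c)) (y·x̂_c) ‖y‖^{−(d+α)} dy`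
(form valid for `α ∈ [1,2)`), where `x̂_c = x_c/‖x_c‖`. -/
noncomputable def IoutPlus (d : ℕ) (α γ : ℝ) (xc : EuclideanSpace ℝ (Fin d))
    (w : EuclideanSpace ℝ (Fin d) → ℝ) : ℝ :=
  ∫ y in {y : EuclideanSpace ℝ (Fin d) |
      γ ≤ ‖y‖ ∧ 0 ≤ (inner ℝ y (‖xc‖⁻¹ • xc) : ℝ)},
    (w (xc + y) - w xc) * (inner ℝ y (‖xc‖⁻¹ • xc) : ℝ) * ‖y‖ ^ (-((d : ℝ) + α))


section AuxLemmas
open Filter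

lemma derivAt_nonpos_right {f : ℝ → ℝ} {f' a b : ℝ} (hab : a < b)
    (hf : HasDerivAt f f' a) (h : ∀ s ∈ Ioo a b, f s ≤ f a) : f' ≤ 0 := by
  have hne : Ioo a b ⊆ ({a}ᶜ : Set ℝ) := fun s hs => ne_of_gt hs.1
  have h1 : Tendsto (slope f a) (nhdsWithin a (Ioo a b)) (nhds f') :=
    (hasDerivAt_iff_tendsto_slope.mp hf).mono_left (nhdsWithin_mono _ hne)
  have : (nhdsWithin a (Ioo a b)).NeBot := left_nhdsWithin_Ioo_neBot hab
  refine le_of_tendsto h1 ?_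
  filter_upwards [self_mem_nhdsWithin] with s hs
  rw [slope_def_field]
  exact div_nonpos_of_nonpos_of_nonneg (by linarith [h s hs]) (by linarith [hs.1])

lemma derivAt_nonpos_left {f : ℝ → ℝ} {f' a b : ℝ} (hab : b < a)
    (hf : HasDerivAt f f' a) (h : ∀ s ∈ Ioo b a, f a ≤ f s) : f' ≤ 0 := by
  have hne : Ioo b a ⊆ ({a}ᶜ : Set ℝ) := fun s hs => ne_of_lt hs.2
  have h1 : Tendsto (slope f a) (nhdsWithin a (Ioo b a)) (nhds f') :=
    (hasDerivAt_iff_tendsto_slope.mp hf).mono_left (nhdsWithin_mono _ hne)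
  have : (nhdsWithin a (Ioo b a)).NeBot := right_nhdsWithin_Ioo_neBot hab
  refine le_of_tendsto h1 ?_
  filter_upwards [self_mem_nhdsWithin] with s hs
  rw [slope_def_field]
  exact div_nonpos_of_nonneg_of_nonpos (by linarith [h s hs]) (by linarith [hs.2])

lemma second_deriv_nonneg_of_min {ψ : ℝ → ℝ} (hψ : ContDiffAt ℝ 2 ψ 0)
    (hmin : ∀ s, ψ 0 ≤ ψ s) : 0 ≤ deriv (deriv ψ) 0 := by
  by_contra hneg
  push_neg at hneg
  -- ψ is C² on a ball
  obtain ⟨w, hw, hψw⟩ := hψ.contDiffOn (le_refl 2) (by norm_num)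
  obtain ⟨r, hr, hball⟩ := Metric.mem_nhds_iff.mp hw
  have hψw' : ContDiffOn ℝ 2 ψ (Metric.ball (0:ℝ) r) := hψw.mono hball
  have hd1 : ContDiffOn ℝ 1 (deriv ψ) (Metric.ball (0:ℝ) r) :=
    hψw'.deriv_of_isOpen Metric.isOpen_ball (by norm_num)
  -- deriv ψ 0 = 0
  have hmin0 : IsLocalMin ψ 0 := Filter.Eventually.of_forall hmin
  have hd0 : deriv ψ 0 = 0 := hmin0.deriv_eq_zero
  -- deriv ψ has derivative (deriv (deriv ψ) 0) at 0
  have hdd : HasDerivAt (deriv ψ) (deriv (deriv ψ) 0) 0 := by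
    have : DifferentiableAt ℝ (deriv ψ) 0 := by
      have := (hd1 0 (Metric.mem_ball_self hr)).differentiableWithinAt (by norm_num)
      exact this.differentiableAt (Metric.isOpen_ball.mem_nhds (Metric.mem_ball_self hr))
    exact this.hasDerivAt
  -- slope of deriv ψ tends to negative limit, so deriv ψ < 0 on (0, ε)
  have hslope : Tendsto (slope (deriv ψ) 0) (nhdsWithin 0 (Ioi 0)) (nhds (deriv (deriv ψ) 0)) :=
    (hasDerivAt_iff_tendsto_slope.mp hdd).mono_left
      (nhdsWithin_mono _ (fun s hs => ne_of_gt hs))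
  have hev : ∀ᶠ s in nhdsWithin 0 (Ioi (0:ℝ)), deriv ψ s < 0 := by
    filter_upwards [hslope.eventually (eventually_lt_nhds hneg), self_mem_nhdsWithin]
      with s hs1 hs2
    rw [slope_def_field, hd0, sub_zero, sub_zero] at hs1
    exact (div_neg_iff.mp hs1).resolve_left (fun h => absurd hs2 (not_lt.mpr h.2.le)) |>.1
  obtain ⟨e, he, hIoo⟩ := (nhdsGT_basis (0:ℝ)).eventually_iff.mp hev
  set ε := min (e/2) (r/2) with hε
  have hε0 : 0 < ε := lt_min (by linarith) (by linarith)
  have hsub : Icc (0:ℝ) ε ⊆ Metric.ball (0:ℝ) r := by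
    intro s hs
    rw [Metric.mem_ball, Real.dist_eq, sub_zero, abs_of_nonneg hs.1]
    exact lt_of_le_of_lt hs.2 (lt_of_le_of_lt (min_le_right _ _) (by linarith))
  have hanti : StrictAntiOn ψ (Icc 0 ε) := by
    refine strictAntiOn_of_deriv_neg (convex_Icc _ _) ((hψw'.continuousOn).mono hsub) ?_
    intro s hs
    rw [interior_Icc] at hs
    refine hIoo ⟨hs.1, lt_of_lt_of_le hs.2 (le_trans (min_le_left _ _) (by linarith))⟩
  have := hanti (left_mem_Icc.mpr hε0.le) (right_mem_Icc.mpr hε0.le) hε0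
  exact absurd (hmin ε) (not_le.mpr this)

lemma fderiv2_dir_nonneg {E : Type*} [NormedAddCommGroup E] [InnerProductSpace ℝ E]
    {F : E → ℝ} {x0 : E} (hF : ContDiffAt ℝ 2 F x0) (hmin : ∀ y, F x0 ≤ F y) (e : E) :
    0 ≤ fderiv ℝ (fun y => fderiv ℝ F y e) x0 e := by
  set L : ℝ → E := fun s => x0 + s • e with hL
  have hL0 : L 0 = x0 := by simp [hL]
  have hLd : ∀ s : ℝ, HasDerivAt L e s := by
    intro s
    have h1 : HasDerivAt (fun s : ℝ => s • e) ((1:ℝ) • e) s := (hasDerivAt_id s).smul_const e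
    have h2 := h1.const_add x0
    simp only [one_smul] at h2
    exact h2
  set ψ : ℝ → ℝ := fun s => F (L s) with hψdef
  have hψ : ContDiffAt ℝ 2 ψ 0 := by
    have hLc : ContDiffAt ℝ 2 L 0 := (contDiff_const.add (contDiff_id.smul contDiff_const)).contDiffAt
    exact (hL0 ▸ hF).comp 0 hLc
  have h2 : 0 ≤ deriv (deriv ψ) 0 :=
    second_deriv_nonneg_of_min hψ (fun s => by simpa [hψdef, hL0] using hmin (L s))
  -- identify deriv (deriv ψ) 0 with the directional second derivative
  obtain ⟨w, hw, hFw⟩ := hF.contDiffOn (le_refl 2) (by norm_num)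
  have hevd : ∀ᶠ s in nhds (0:ℝ), DifferentiableAt ℝ F (L s) := by
    obtain ⟨r, hr, hball⟩ := Metric.mem_nhds_iff.mp hw
    have hcont : ContinuousAt L 0 := (hLd 0).continuousAt
    have : ∀ᶠ s in nhds (0:ℝ), L s ∈ Metric.ball x0 r := by
      have := hcont.preimage_mem_nhds (by rw [hL0]; exact Metric.ball_mem_nhds x0 hr)
      exact this
    filter_upwards [this] with s hs
    have := (hFw.mono hball) (L s) hs
    exact (this.differentiableWithinAt (by norm_num)).differentiableAt
      (Metric.isOpen_ball.mem_nhds hs)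
  have hevderiv : deriv ψ =ᶠ[nhds (0:ℝ)] fun s => fderiv ℝ F (L s) e := by
    filter_upwards [hevd] with s hs
    exact ((hs.hasFDerivAt).comp_hasDerivAt s (hLd s)).deriv
  have hfd : DifferentiableAt ℝ (fderiv ℝ F) x0 :=
    (hF.fderiv_right (m := 1) (by norm_num)).differentiableAt (by norm_num)
  have happ : DifferentiableAt ℝ (fun y => fderiv ℝ F y e) x0 :=
    (ContinuousLinearMap.apply ℝ ℝ e).differentiableAt.comp x0 hfd
  have hcomp : HasDerivAt (fun s => fderiv ℝ F (L s) e) (fderiv ℝ (fun y => fderiv ℝ F y e) x0 e) 0 := by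
    have := (hL0 ▸ happ.hasFDerivAt).comp_hasDerivAt 0 (hLd 0)
    rw [hL0] at this
    exact this
  calc (0:ℝ) ≤ deriv (deriv ψ) 0 := h2
    _ = deriv (fun s => fderiv ℝ F (L s) e) 0 := hevderiv.deriv_eq
    _ = fderiv ℝ (fun y => fderiv ℝ F y e) x0 e := hcomp.deriv

lemma gradient_radial_dir {E : Type*} [NormedAddCommGroup E] [InnerProductSpace ℝ E]
    [CompleteSpace E]
    {Ux : E → ℝ} {xc : E} (hdiff : DifferentiableAt ℝ Ux xc) (hxc : xc ≠ 0)
    (hrad : ∀ y : E, ‖y‖ = ‖xc‖ → Ux y = Ux xc)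
    (hmono : ∀ y : E, ‖xc‖ ≤ ‖y‖ → Ux y ≤ Ux xc) :
    gradient Ux xc = (-‖gradient Ux xc‖) • (‖xc‖⁻¹ • xc) := by
  have hxn : (0:ℝ) < ‖xc‖ := norm_pos_iff.mpr hxc
  have hinner : ∀ y : E, (inner ℝ (gradient Ux xc) y : ℝ) = fderiv ℝ Ux xc y := by
    intro y; rw [gradient]; exact InnerProductSpace.toDual_symm_apply
  -- (a) orthogonal directions
  have horth : ∀ w : E, (inner ℝ w xc : ℝ) = 0 → fderiv ℝ Ux xc w = 0 := by
    intro w hw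
    rcases eq_or_ne w 0 with h0 | h0
    · simp [h0]
    have hwn : (0:ℝ) < ‖w‖ := norm_pos_iff.mpr h0
    set w' : E := (‖xc‖ / ‖w‖) • w with hw'def
    have hw'xc : (inner ℝ xc w' : ℝ) = 0 := by
      rw [hw'def, real_inner_smul_right, real_inner_comm, hw, mul_zero]
    have hw'n : ‖w'‖ = ‖xc‖ := by
      rw [hw'def, norm_smul, Real.norm_eq_abs, abs_of_pos (div_pos hxn hwn)]
      field_simp
    set c : ℝ → E := fun s => Real.cos s • xc + Real.sin s • w' with hcdef
    have hnorm : ∀ s, ‖c s‖ = ‖xc‖ := by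
      intro s
      have hsq : ‖c s‖ ^ 2 = ‖xc‖ ^ 2 := by
        rw [hcdef]
        rw [norm_add_sq_real, real_inner_smul_left, real_inner_smul_right, hw'xc]
        rw [norm_smul, norm_smul, Real.norm_eq_abs, Real.norm_eq_abs, hw'n]
        rw [mul_pow, mul_pow, sq_abs, sq_abs]
        nlinarith [Real.sin_sq_add_cos_sq s]
      nlinarith [norm_nonneg (c s), norm_nonneg xc]
    have hc0 : c 0 = xc := by simp [hcdef]
    have hcd : HasDerivAt c w' 0 := by
      have h1 : HasDerivAt (fun s => Real.cos s • xc) ((-Real.sin 0) • xc) 0 :=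
        (Real.hasDerivAt_cos 0).smul_const xc
      have h2 : HasDerivAt (fun s => Real.sin s • w') ((Real.cos 0) • w') 0 :=
        (Real.hasDerivAt_sin 0).smul_const w'
      have h3 := h1.add h2
      simp only [Real.sin_zero, neg_zero, zero_smul, Real.cos_zero, one_smul, zero_add] at h3
      exact h3
    have hdiff' : HasFDerivAt Ux (fderiv ℝ Ux xc) (c 0) := by
      rw [hc0]; exact hdiff.hasFDerivAt
    have hcomp : HasDerivAt (fun s => Ux (c s)) (fderiv ℝ Ux xc w') 0 :=
      hdiff'.comp_hasDerivAt 0 hcd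
    have hconst : (fun s => Ux (c s)) = fun _ => Ux xc := funext fun s => hrad _ (hnorm s)
    have : fderiv ℝ Ux xc w' = 0 := by
      have h0' : HasDerivAt (fun _ : ℝ => Ux xc) 0 0 := hasDerivAt_const 0 _
      exact (hconst ▸ hcomp).unique h0'
    have hmap : fderiv ℝ Ux xc w' = (‖xc‖ / ‖w‖) * fderiv ℝ Ux xc w := by
      rw [hw'def, (fderiv ℝ Ux xc).map_smul]; rfl
    rw [hmap] at this
    have hne : ‖xc‖ / ‖w‖ ≠ 0 := ne_of_gt (div_pos hxn hwn)
    exact (mul_eq_zero.mp this).resolve_left hne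
  -- (b) radial direction is nonpositive
  have hray : fderiv ℝ Ux xc xc ≤ 0 := by
    set ψ : ℝ → ℝ := fun s => Ux ((1 + s) • xc) with hψdef
    have hLd : HasDerivAt (fun s : ℝ => (1 + s) • xc) ((1:ℝ) • xc) 0 :=
      (((hasDerivAt_id (0:ℝ)).const_add 1)).smul_const xc
    have hL0 : (1 + (0:ℝ)) • xc = xc := by norm_num
    have hψd : HasDerivAt ψ (fderiv ℝ Ux xc xc) 0 := by
      have := (hL0 ▸ hdiff.hasFDerivAt).comp_hasDerivAt 0 hLd
      simp only [one_smul] at this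
      rw [hL0] at this
      exact this
    refine derivAt_nonpos_right (zero_lt_one) hψd ?_
    intro s hs
    have h1 : ψ 0 = Ux xc := by simp [hψdef]
    have h2 : ‖xc‖ ≤ ‖(1 + s) • xc‖ := by
      rw [norm_smul, Real.norm_eq_abs, abs_of_pos (by linarith [hs.1] : (0:ℝ) < 1 + s)]
      nlinarith [hs.1, hxn]
    rw [h1]; exact hmono _ h2
  -- (c) assemble
  set G : E := gradient Ux xc with hGdef
  set xh : E := ‖xc‖⁻¹ • xc with hxhdef
  set cG : ℝ := inner ℝ G xh with hcGdef
  have hxhxc : (inner ℝ xh xc : ℝ) = ‖xc‖ := by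
    rw [hxhdef, real_inner_smul_left, real_inner_self_eq_norm_mul_norm]
    field_simp
  have hGxc : (inner ℝ G xc : ℝ) = ‖xc‖ * cG := by
    rw [hcGdef, hxhdef, real_inner_smul_right]
    field_simp
  set w : E := G - cG • xh with hwdef
  have hwxc : (inner ℝ w xc : ℝ) = 0 := by
    rw [hwdef, inner_sub_left, real_inner_smul_left, hxhxc, hGxc]
    ring
  have hGw : (inner ℝ G w : ℝ) = 0 := by rw [hinner]; exact horth w hwxc
  have hxhw : (inner ℝ xh w : ℝ) = 0 := by
    rw [hxhdef, real_inner_smul_left, real_inner_comm, hwxc, mul_zero]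
  have hw0 : w = 0 := by
    have : (inner ℝ w w : ℝ) = 0 := by
      rw [hwdef, inner_sub_left, real_inner_smul_left]
      rw [← hwdef]
      rw [hGw, hxhw]; ring
    exact inner_self_eq_zero.mp this
  have hGeq : G = cG • xh := sub_eq_zero.mp hw0
  have hcGle : cG ≤ 0 := by
    have : cG = ‖xc‖⁻¹ * fderiv ℝ Ux xc xc := by
      rw [hcGdef, hxhdef, real_inner_smul_right, hinner]
    rw [this]
    exact mul_nonpos_of_nonneg_of_nonpos (inv_nonneg.mpr hxn.le) hray
  have hxhn : ‖xh‖ = 1 := by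
    rw [hxhdef, norm_smul, norm_inv, norm_norm]
    field_simp
  have hGn : ‖G‖ = -cG := by
    rw [hGeq, norm_smul, hxhn, mul_one, Real.norm_eq_abs, abs_of_nonpos hcGle]
  rw [hGn, neg_neg]
  exact hGeq

end AuxLemmas

set_option maxHeartbeats 1000000 in
/-- Contact analysis lemma (Lemma 3.1), case `α ∈ [1,2)`: if the radially symmetric,
radially non-increasing barrier `U` touches the solution `u` of the viscous approximation
from above at `(t_c,x_c)` with `‖x_c‖ > 1`, then at the contact point
`∂_t U ≤ ∇U·G(V) + U L(V) + δ ΔU + e` with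
`e = ‖∇U‖ (I⁺_out(V) − I⁺_out(v)) ≥ 0`, where `v = u^{m−1}`, `V = U^{m−1}` and `γ > 0`
satisfies `γ ‖∇U(t_c,x_c)‖ ≤ U(t_c,x_c)`. -/
theorem contact_analysis_alpha_ge_one
    (d : ℕ) (hd : 1 ≤ d) (α m δ : ℝ) (hα1 : 1 ≤ α) (hα2 : α < 2) (hm : 1 < m)
    (hδ : 0 ≤ δ)
    (u : ℝ → EuclideanSpace ℝ (Fin d) → ℝ)
    (hunn : ∀ t x, 0 ≤ u t x) (hub : ∃ M, ∀ t x, u t x ≤ M)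
    (hut : ∀ x, ContDiffOn ℝ 1 (fun t => u t x) (Set.Ici 0))
    (hux : ∀ t : ℝ, 0 ≤ t → ContDiff ℝ 2 (u t))
    (huG : ∀ t : ℝ, 0 ≤ t → ∀ x, Integrable (fun z : EuclideanSpace ℝ (Fin d) =>
      ((u t (x + z) ^ (m - 1) - u t x ^ (m - 1)) * ‖z‖ ^ (-((d : ℝ) + α))) • z))
    (huL : ∀ t : ℝ, 0 ≤ t → ∀ x, Integrable (fun z : EuclideanSpace ℝ (Fin d) =>
      (u t (x + z) ^ (m - 1) + u t (x - z) ^ (m - 1) - 2 * u t x ^ (m - 1))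
        * ‖z‖ ^ (-((d : ℝ) + α))))
    (hueq : ∀ t : ℝ, 0 < t → ∀ x,
      deriv (fun s => u s x) t
        = (inner ℝ (gradient (u t) x) (fracGrad d α (fun y => u t y ^ (m - 1)) x) : ℝ)
          + u t x * fracLap d α (fun y => u t y ^ (m - 1)) x
          + δ * lap d (u t) x)
    (U : ℝ → EuclideanSpace ℝ (Fin d) → ℝ)
    (hUnn : ∀ t x, 0 < t → 0 ≤ U t x)
    (hUrad : ∀ t : ℝ, 0 < t → ∀ x y : EuclideanSpace ℝ (Fin d),
      ‖x‖ = ‖y‖ → U t x = U t y)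
    (hUmono : ∀ t : ℝ, 0 < t → ∀ x y : EuclideanSpace ℝ (Fin d),
      ‖x‖ ≤ ‖y‖ → U t y ≤ U t x)
    (hUC2 : ContDiffOn ℝ 2 (fun p : ℝ × EuclideanSpace ℝ (Fin d) => U p.1 p.2)
      (Set.Ioi (0 : ℝ) ×ˢ {x : EuclideanSpace ℝ (Fin d) | 1 < ‖x‖}))
    (tc : ℝ) (htc : 0 < tc) (xc : EuclideanSpace ℝ (Fin d)) (hxc : 1 < ‖xc‖)
    (hVG : Integrable (fun z : EuclideanSpace ℝ (Fin d) =>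
      ((U tc (xc + z) ^ (m - 1) - U tc xc ^ (m - 1)) * ‖z‖ ^ (-((d : ℝ) + α))) • z))
    (hVL : Integrable (fun z : EuclideanSpace ℝ (Fin d) =>
      (U tc (xc + z) ^ (m - 1) + U tc (xc - z) ^ (m - 1) - 2 * U tc xc ^ (m - 1))
        * ‖z‖ ^ (-((d : ℝ) + α))))
    (htouch : ∀ t x, 0 < t → t ≤ tc → u t x ≤ U t x)
    (hcontact : u tc xc = U tc xc)
    (γ : ℝ) (hγ : 0 < γ) (hγle : γ * ‖gradient (U tc) xc‖ ≤ U tc xc) :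
    deriv (fun s => U s xc) tc
      ≤ (inner ℝ (gradient (U tc) xc)
            (fracGrad d α (fun y => U tc y ^ (m - 1)) xc) : ℝ)
        + U tc xc * fracLap d α (fun y => U tc y ^ (m - 1)) xc
        + δ * lap d (U tc) xc
        + ‖gradient (U tc) xc‖
          * (IoutPlus d α γ xc (fun y => U tc y ^ (m - 1))
             - IoutPlus d α γ xc (fun y => u tc y ^ (m - 1))) ∧
    0 ≤ ‖gradient (U tc) xc‖
          * (IoutPlus d α γ xc (fun y => U tc y ^ (m - 1))
             - IoutPlus d α γ xc (fun y => u tc y ^ (m - 1))) := by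
  have hm1 : (0:ℝ) ≤ m - 1 := by linarith
  have hxcn : (0:ℝ) < ‖xc‖ := lt_trans one_pos hxc
  have hxc0 : xc ≠ 0 := fun h => by simp [h] at hxcn
  -- basic openness and regularity
  have hopen : IsOpen {x : EuclideanSpace ℝ (Fin d) | 1 < ‖x‖} :=
    isOpen_lt continuous_const continuous_norm
  have hUxC2 : ContDiffOn ℝ 2 (fun x => U tc x) {x : EuclideanSpace ℝ (Fin d) | 1 < ‖x‖} :=
    hUC2.comp ((contDiff_const.prodMk contDiff_id).contDiffOn)
      (fun x hx => ⟨htc, hx⟩)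
  have hUxC2at : ContDiffAt ℝ 2 (fun x => U tc x) xc :=
    hUxC2.contDiffAt (hopen.mem_nhds hxc)
  have hdiffU : DifferentiableAt ℝ (fun x => U tc x) xc :=
    hUxC2at.differentiableAt (by norm_num)
  have huxc : ContDiff ℝ 2 (u tc) := hux tc htc.le
  have hdiffu : DifferentiableAt ℝ (u tc) xc := (huxc.differentiable (by norm_num)) xc
  -- the contact function F
  have hFmin : ∀ y, U tc xc - u tc xc ≤ U tc y - u tc y := by
    intro y
    have h1 := htouch tc y htc le_rfl
    have h2 : U tc xc - u tc xc = 0 := by rw [hcontact]; ring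
    linarith
  have hFC2 : ContDiffAt ℝ 2 (fun y => U tc y - u tc y) xc := hUxC2at.sub huxc.contDiffAt
  -- gradient equality at the contact point
  have hfdeq : fderiv ℝ (fun x => U tc x) xc = fderiv ℝ (u tc) xc := by
    have hmin : IsLocalMin (fun y => U tc y - u tc y) xc :=
      Filter.Eventually.of_forall hFmin
    have h0 : fderiv ℝ (fun y => U tc y - u tc y) xc = 0 := hmin.fderiv_eq_zero
    rw [fderiv_fun_sub hdiffU hdiffu] at h0
    exact sub_eq_zero.mp h0
  have hgradeq : gradient (U tc) xc = gradient (u tc) xc := by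
    simp only [gradient]
    rw [show fderiv ℝ (U tc) xc = fderiv ℝ (u tc) xc from hfdeq]
  -- Laplacian comparison
  have hlap : lap d (u tc) xc ≤ lap d (U tc) xc := by
    unfold lap
    refine Finset.sum_le_sum (fun i _ => ?_)
    set e := EuclideanSpace.single i (1:ℝ) with he
    have hkey := fderiv2_dir_nonneg hFC2 hFmin e
    have hUd1 : ContDiffAt ℝ 1 (fderiv ℝ (fun x => U tc x)) xc :=
      hUxC2at.fderiv_right (m := 1) (by norm_num)
    have hud1 : ContDiffAt ℝ 1 (fderiv ℝ (u tc)) xc :=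
      huxc.contDiffAt.fderiv_right (m := 1) (by norm_num)
    have hUdd : DifferentiableAt ℝ (fun y => fderiv ℝ (fun x => U tc x) y e) xc :=
      (ContinuousLinearMap.apply ℝ ℝ e).differentiableAt.comp xc
        (hUd1.differentiableAt (by norm_num))
    have hudd : DifferentiableAt ℝ (fun y => fderiv ℝ (u tc) y e) xc :=
      (ContinuousLinearMap.apply ℝ ℝ e).differentiableAt.comp xc
        (hud1.differentiableAt (by norm_num))
    have hev : (fun y => fderiv ℝ (fun y' => U tc y' - u tc y') y e)
        =ᶠ[nhds xc] fun y => fderiv ℝ (fun x => U tc x) y e - fderiv ℝ (u tc) y e := by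
      filter_upwards [hopen.mem_nhds hxc] with y hy
      have hdUy : DifferentiableAt ℝ (fun x => U tc x) y :=
        (hUxC2.contDiffAt (hopen.mem_nhds hy)).differentiableAt (by norm_num)
      have hduy : DifferentiableAt ℝ (u tc) y := (huxc.differentiable (by norm_num)) y
      rw [fderiv_fun_sub hdUy hduy]
      simp
    have heq : fderiv ℝ (fun y => fderiv ℝ (fun y' => U tc y' - u tc y') y e) xc
        = fderiv ℝ (fun y => fderiv ℝ (fun x => U tc x) y e - fderiv ℝ (u tc) y e) xc :=
      hev.fderiv_eq
    rw [heq, fderiv_fun_sub hUdd hudd] at hkey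
    simp only [ContinuousLinearMap.coe_sub', Pi.sub_apply] at hkey
    linarith
  -- time derivative comparison
  have hUtC2 : ContDiffOn ℝ 2 (fun t => U t xc) (Ioi (0:ℝ)) :=
    hUC2.comp ((contDiff_id.prodMk contDiff_const).contDiffOn) (fun t ht => ⟨ht, hxc⟩)
  have hdUt : HasDerivAt (fun s => U s xc) (deriv (fun s => U s xc) tc) tc := by
    have h1 : DifferentiableAt ℝ (fun s => U s xc) tc :=
      ((hUtC2.contDiffAt (isOpen_Ioi.mem_nhds htc)).differentiableAt (by norm_num))
    exact h1.hasDerivAt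
  have hdut : HasDerivAt (fun s => u s xc) (deriv (fun s => u s xc) tc) tc := by
    have h1 : DifferentiableWithinAt ℝ (fun s => u s xc) (Set.Ici 0) tc :=
      ((hut xc).differentiableOn (by norm_num)) tc (mem_Ici.mpr htc.le)
    exact (h1.differentiableAt
      (Filter.mem_of_superset (Ioi_mem_nhds htc) Ioi_subset_Ici_self)).hasDerivAt
  have htderiv : deriv (fun s => U s xc) tc ≤ deriv (fun s => u s xc) tc := by
    have hsub : HasDerivAt (fun s => U s xc - u s xc)
        (deriv (fun s => U s xc) tc - deriv (fun s => u s xc) tc) tc := hdUt.sub hdut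
    have h := derivAt_nonpos_left (b := tc/2) (by linarith) hsub ?_
    · linarith
    · intro s hs
      have hs0 : 0 < s := lt_trans (by linarith) hs.1
      have := htouch s xc hs0 hs.2.le
      have h2 : U tc xc - u tc xc = 0 := by rw [hcontact]; ring
      simp only [h2]
      linarith
  -- ====== integral part ======
  have hKnn : ∀ z : EuclideanSpace ℝ (Fin d), (0:ℝ) ≤ ‖z‖ ^ (-((d:ℝ)+α)) :=
    fun z => Real.rpow_nonneg (norm_nonneg z) _
  have hgnn : ∀ y : EuclideanSpace ℝ (Fin d), 0 ≤ U tc y ^ (m-1) - u tc y ^ (m-1) := by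
    intro y
    have := Real.rpow_le_rpow (hunn tc y) (htouch tc y htc le_rfl) hm1
    linarith
  have hcpow : U tc xc ^ (m-1) = u tc xc ^ (m-1) := by rw [hcontact]
  have huG' := huG tc htc.le xc
  have huL' := huL tc htc.le xc
  set dt : EuclideanSpace ℝ (Fin d) → ℝ :=
    fun z => (inner ℝ z (‖xc‖⁻¹ • xc) : ℝ) with hdt
  set g : EuclideanSpace ℝ (Fin d) → ℝ :=
    fun z => U tc (xc + z) ^ (m-1) - u tc (xc + z) ^ (m-1) with hgdef
  set K : EuclideanSpace ℝ (Fin d) → ℝ := fun z => ‖z‖ ^ (-((d:ℝ)+α)) with hKdef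
  set P : EuclideanSpace ℝ (Fin d) → ℝ := fun z => g z * dt z * K z with hPdef
  set Q : EuclideanSpace ℝ (Fin d) → ℝ :=
    fun z => (g z + (U tc (xc - z) ^ (m-1) - u tc (xc - z) ^ (m-1))) * K z with hQdef
  have hgnn' : ∀ z, 0 ≤ g z := fun z => hgnn (xc + z)
  have hKnn' : ∀ z, 0 ≤ K z := fun z => hKnn z
  have hxhn : ‖(‖xc‖⁻¹ • xc : EuclideanSpace ℝ (Fin d))‖ = 1 := by
    rw [norm_smul, norm_inv, norm_norm]
    field_simp
  have hdtle : ∀ z, |dt z| ≤ ‖z‖ := by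
    intro z
    calc |dt z| ≤ ‖z‖ * ‖(‖xc‖⁻¹ • xc : EuclideanSpace ℝ (Fin d))‖ :=
          abs_real_inner_le_norm z _
    _ = ‖z‖ := by rw [hxhn, mul_one]
  have hdtcont : Continuous dt := by
    rw [hdt]; exact continuous_id.inner continuous_const
  -- integrability
  have hA1 : Integrable (fun z => (g z * K z) • z) := by
    have h := hVG.sub huG'
    refine h.congr (Filter.Eventually.of_forall fun z => ?_)
    simp only [Pi.sub_apply, hgdef, hKdef]
    rw [← sub_smul]
    congr 1
    rw [hcpow]; ring
  have hPint : Integrable P := by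
    have h := (innerSL ℝ ((‖xc‖⁻¹ • xc : EuclideanSpace ℝ (Fin d)))).integrable_comp hA1
    refine h.congr (Filter.Eventually.of_forall fun z => ?_)
    simp only [innerSL_apply_apply, hPdef, hdt]
    rw [real_inner_smul_right, real_inner_comm]
    ring
  have hQint : Integrable Q := by
    have h := hVL.sub huL'
    refine h.congr (Filter.Eventually.of_forall fun z => ?_)
    simp only [Pi.sub_apply, hQdef, hgdef, hKdef]
    rw [hcpow]; ring
  have hQnn : ∀ z, 0 ≤ Q z := by
    intro z
    rw [hQdef]
    exact mul_nonneg (add_nonneg (hgnn' z) (hgnn (xc - z))) (hKnn' z)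
  have hQint_nn : 0 ≤ ∫ z, Q z := integral_nonneg hQnn
  -- gradient direction
  have hGdir : gradient (U tc) xc = (-‖gradient (U tc) xc‖) • (‖xc‖⁻¹ • xc) :=
    gradient_radial_dir hdiffU hxc0 (fun y hy => hUrad tc htc y xc hy)
      (fun y hy => hUmono tc htc xc y hy)
  -- identity for the drift term
  have hGsub : fracGrad d α (fun y => U tc y ^ (m-1)) xc
      - fracGrad d α (fun y => u tc y ^ (m-1)) xc = ∫ z, (g z * K z) • z := by
    simp only [fracGrad]
    rw [← integral_sub hVG huG']
    refine integral_congr_ae (Filter.Eventually.of_forall fun z => ?_)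
    simp only [Pi.sub_apply, hgdef, hKdef]
    rw [← sub_smul]
    congr 1
    rw [hcpow]; ring
  have hinner2 : (inner ℝ (gradient (U tc) xc)
        (fracGrad d α (fun y => u tc y ^ (m-1)) xc) : ℝ)
      = (inner ℝ (gradient (U tc) xc)
          (fracGrad d α (fun y => U tc y ^ (m-1)) xc) : ℝ)
        + ‖gradient (U tc) xc‖ * ∫ z, P z := by
    have h1 : (inner ℝ (gradient (U tc) xc)
        (fracGrad d α (fun y => U tc y ^ (m-1)) xc
          - fracGrad d α (fun y => u tc y ^ (m-1)) xc) : ℝ)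
        = - (‖gradient (U tc) xc‖ * ∫ z, P z) := by
      rw [hGsub, ← integral_inner hA1 (gradient (U tc) xc)]
      have hpt : ∀ z, (inner ℝ (gradient (U tc) xc) ((g z * K z) • z) : ℝ)
          = (-‖gradient (U tc) xc‖) * P z := by
        intro z
        conv_lhs => rw [hGdir]
        rw [real_inner_smul_left, real_inner_smul_right]
        simp only [hPdef, hdt]
        rw [real_inner_comm]
        ring
      rw [integral_congr_ae (Filter.Eventually.of_forall hpt), integral_const_mul]
      ring
    rw [inner_sub_right] at h1
    linarith
  -- identity for the diffusion term
  have hLsub : fracLap d α (fun y => U tc y ^ (m-1)) xc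
      - fracLap d α (fun y => u tc y ^ (m-1)) xc = ∫ z, Q z := by
    simp only [fracLap]
    rw [← integral_sub hVL huL']
    refine integral_congr_ae (Filter.Eventually.of_forall fun z => ?_)
    simp only [Pi.sub_apply, hQdef, hgdef, hKdef]
    rw [hcpow]; ring
  -- the contact set S and the outer integral identity
  set S : Set (EuclideanSpace ℝ (Fin d)) := {y | γ ≤ ‖y‖ ∧ 0 ≤ dt y} with hSdef
  have hSmeas : MeasurableSet S := by
    have : S = {y : EuclideanSpace ℝ (Fin d) | γ ≤ ‖y‖} ∩ {y | 0 ≤ dt y} := rfl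
    rw [this]
    exact ((isClosed_le continuous_const continuous_norm).inter
      (isClosed_le continuous_const hdtcont)).measurableSet
  have hfV : Integrable (fun y : EuclideanSpace ℝ (Fin d) =>
      (U tc (xc + y) ^ (m-1) - U tc xc ^ (m-1)) * dt y * K y) := by
    have h := (innerSL ℝ ((‖xc‖⁻¹ • xc : EuclideanSpace ℝ (Fin d)))).integrable_comp hVG
    refine h.congr (Filter.Eventually.of_forall fun z => ?_)
    simp only [innerSL_apply_apply, hdt, hKdef]
    rw [real_inner_smul_right, real_inner_comm]
    ring
  have hfv : Integrable (fun y : EuclideanSpace ℝ (Fin d) =>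
      (u tc (xc + y) ^ (m-1) - u tc xc ^ (m-1)) * dt y * K y) := by
    have h := (innerSL ℝ ((‖xc‖⁻¹ • xc : EuclideanSpace ℝ (Fin d)))).integrable_comp huG'
    refine h.congr (Filter.Eventually.of_forall fun z => ?_)
    simp only [innerSL_apply_apply, hdt, hKdef]
    rw [real_inner_smul_right, real_inner_comm]
    ring
  have hIoutV : IoutPlus d α γ xc (fun y => U tc y ^ (m-1))
      = ∫ y in S, (U tc (xc + y) ^ (m-1) - U tc xc ^ (m-1)) * dt y * K y := by
    simp only [IoutPlus, hSdef, hdt, hKdef]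
  have hIoutv : IoutPlus d α γ xc (fun y => u tc y ^ (m-1))
      = ∫ y in S, (u tc (xc + y) ^ (m-1) - u tc xc ^ (m-1)) * dt y * K y := by
    simp only [IoutPlus, hSdef, hdt, hKdef]
  have hIout : IoutPlus d α γ xc (fun y => U tc y ^ (m-1))
      - IoutPlus d α γ xc (fun y => u tc y ^ (m-1)) = ∫ y in S, P y := by
    rw [hIoutV, hIoutv, ← integral_sub hfV.integrableOn hfv.integrableOn]
    refine integral_congr_ae (Filter.Eventually.of_forall fun z => ?_)
    simp only [Pi.sub_apply, hPdef, hgdef]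
    rw [hcpow]; ring
  -- splitting the whole-space integral of P
  set T : Set (EuclideanSpace ℝ (Fin d)) := {z | 0 ≤ dt z} with hTdef
  have hTmeas : MeasurableSet T := (isClosed_le continuous_const hdtcont).measurableSet
  set A : Set (EuclideanSpace ℝ (Fin d)) := Sᶜ ∩ T with hAdef
  set B : Set (EuclideanSpace ℝ (Fin d)) := Sᶜ ∩ Tᶜ with hBdef
  have hAmeas : MeasurableSet A := hSmeas.compl.inter hTmeas
  have hBmeas : MeasurableSet B := hSmeas.compl.inter hTmeas.compl
  have hsplit1 : ∫ z, P z = (∫ z in S, P z) + ∫ z in Sᶜ, P z :=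
    (integral_add_compl hSmeas hPint).symm
  have hsplit2 : ∫ z in Sᶜ, P z = (∫ z in A, P z) + ∫ z in B, P z := by
    have hdisj : Disjoint A B :=
      disjoint_compl_right.mono inter_subset_right inter_subset_right
    have hunion : A ∪ B = Sᶜ := Set.inter_union_compl _ _
    rw [← hunion, setIntegral_union hdisj hBmeas hPint.integrableOn hPint.integrableOn]
  have hbB : ∫ z in B, P z ≤ 0 := by
    refine setIntegral_nonpos hBmeas (fun z hz => ?_)
    have hzT : dt z < 0 := not_le.mp hz.2
    rw [hPdef]
    exact mul_nonpos_of_nonpos_of_nonneg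
      (mul_nonpos_of_nonneg_of_nonpos (hgnn' z) hzT.le) (hKnn' z)
  have hbA : ∫ z in A, P z ≤ γ * ∫ z, Q z := by
    have h1 : ∫ z in A, P z ≤ ∫ z in A, γ * Q z := by
      refine setIntegral_mono_on hPint.integrableOn
        ((hQint.const_mul γ).integrableOn) hAmeas (fun z hz => ?_)
      have hzT : 0 ≤ dt z := hz.2
      have hzS : ¬(γ ≤ ‖z‖ ∧ 0 ≤ dt z) := hz.1
      have hnormz : ‖z‖ < γ := by
        by_contra h
        push_neg at h
        exact hzS ⟨h, hzT⟩
      have hdz : dt z < γ := lt_of_le_of_lt (le_trans (le_abs_self _) (hdtle z)) hnormz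
      simp only [hPdef, hQdef]
      nlinarith [mul_nonneg (sub_nonneg.mpr hdz.le) (mul_nonneg (hgnn' z) (hKnn' z)),
        mul_nonneg hγ.le (mul_nonneg (hgnn (xc - z)) (hKnn' z))]
    have h3 : ∫ z in A, Q z ≤ ∫ z, Q z :=
      setIntegral_le_integral hQint (Filter.Eventually.of_forall hQnn)
    calc ∫ z in A, P z ≤ ∫ z in A, γ * Q z := h1
    _ = γ * ∫ z in A, Q z := by rw [integral_const_mul]
    _ ≤ γ * ∫ z, Q z := mul_le_mul_of_nonneg_left h3 hγ.le
  have hSP_nonneg : 0 ≤ ∫ z in S, P z := by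
    refine setIntegral_nonneg hSmeas (fun z hz => ?_)
    rw [hPdef]
    exact mul_nonneg (mul_nonneg (hgnn' z) hz.2) (hKnn' z)
  have hN : (0:ℝ) ≤ ‖gradient (U tc) xc‖ := norm_nonneg _
  have hUcnn : 0 ≤ U tc xc := hUnn tc xc htc
  have h5 : ‖gradient (U tc) xc‖ * ∫ z, P z
      ≤ ‖gradient (U tc) xc‖ * (∫ z in S, P z) + U tc xc * ∫ z, Q z := by
    have e1 : ∫ z, P z = (∫ z in S, P z) + ((∫ z in A, P z) + ∫ z in B, P z) := by
      rw [hsplit1, hsplit2]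
    rw [e1]
    nlinarith [mul_le_mul_of_nonneg_left hbA hN, mul_le_mul_of_nonneg_left hbB hN,
      mul_le_mul_of_nonneg_right hγle hQint_nn]
  -- ====== assembly ======
  constructor
  · have heq := hueq tc htc xc
    rw [← hgradeq, hcontact] at heq
    have hle : (inner ℝ (gradient (U tc) xc)
          (fracGrad d α (fun y => u tc y ^ (m-1)) xc) : ℝ)
        + U tc xc * fracLap d α (fun y => u tc y ^ (m-1)) xc + δ * lap d (u tc) xc
        ≤ (inner ℝ (gradient (U tc) xc)
            (fracGrad d α (fun y => U tc y ^ (m-1)) xc) : ℝ)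
          + U tc xc * fracLap d α (fun y => U tc y ^ (m-1)) xc + δ * lap d (U tc) xc
          + ‖gradient (U tc) xc‖
            * (IoutPlus d α γ xc (fun y => U tc y ^ (m-1))
               - IoutPlus d α γ xc (fun y => u tc y ^ (m-1))) := by
      rw [hinner2, hIout]
      have hv : fracLap d α (fun y => u tc y ^ (m-1)) xc
          = fracLap d α (fun y => U tc y ^ (m-1)) xc - ∫ z, Q z := by linarith
      rw [hv]
      have hdlap := mul_le_mul_of_nonneg_left hlap hδ
      nlinarith [h5, hdlap]
    calc deriv (fun s => U s xc) tc ≤ deriv (fun s => u s xc) tc := htderiv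
    _ = _ := heq
    _ ≤ _ := hle
  · rw [hIout]
    exact mul_nonneg hN hSP_nonneg
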